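/- Let A be the algebra over a field k of characteristic zero presented by generators x, y and relations x² = 0, y² = 0, xyx = yxy. Then A has dimension 6, with basis {1, x, y, xy, yx, xyx}. -/

import Mathlib

/-- Relations `x² = 0`, `y² = 0`, `xyx = yxy` in the free algebra on two
generators (`X 0 = x`, `X 1 = y`). -/
inductive Stmt9Rel (k : Type*) [Field k] :
    FreeAlgebra k (Fin 2) → FreeAlgebra k (Fin 2) → Prop
  | xx : Stmt9Rel k (FreeAlgebra.ι k 0 * FreeAlgebra.ι k 0) 0
  | yy : Stmt9Rel k (FreeAlgebra.ι k 1 * FreeAlgebra.ι k 1) 0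
  | braid : Stmt9Rel k
      (FreeAlgebra.ι k 0 * FreeAlgebra.ι k 1 * FreeAlgebra.ι k 0)
      (FreeAlgebra.ι k 1 * FreeAlgebra.ι k 0 * FreeAlgebra.ι k 1)

section Aux

variable (k : Type*) [Field k]

/-- The matrix of `x` in the regular representation (nilCoxeter model). -/
def stmt9X : Matrix (Fin 6) (Fin 6) k :=
  Matrix.of fun i j =>
    if (i = 1 ∧ j = 0) ∨ (i = 3 ∧ j = 2) ∨ (i = 5 ∧ j = 4) then 1 else 0

/-- The matrix of `y`. -/
def stmt9Y : Matrix (Fin 6) (Fin 6) k :=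
  Matrix.of fun i j =>
    if (i = 2 ∧ j = 0) ∨ (i = 4 ∧ j = 1) ∨ (i = 5 ∧ j = 3) then 1 else 0

lemma stmt9XX : stmt9X k * stmt9X k = 0 := by
  ext i j
  fin_cases i <;> fin_cases j <;>
    simp (config := { decide := true }) [stmt9X, Matrix.mul_apply, Fin.sum_univ_six]

lemma stmt9YY : stmt9Y k * stmt9Y k = 0 := by
  ext i j
  fin_cases i <;> fin_cases j <;>
    simp (config := { decide := true }) [stmt9Y, Matrix.mul_apply, Fin.sum_univ_six]

lemma stmt9Braid : stmt9X k * stmt9Y k * stmt9X k = stmt9Y k * stmt9X k * stmt9Y k := by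
  ext i j
  fin_cases i <;> fin_cases j <;>
    simp (config := { decide := true }) [stmt9X, stmt9Y, Matrix.mul_apply, Fin.sum_univ_six]

end Aux

theorem stmt_9 (k : Type*) [Field k] [CharZero k] :
    Module.finrank k (RingQuot (Stmt9Rel k)) = 6 ∧
      ∃ B : Module.Basis (Fin 6) k (RingQuot (Stmt9Rel k)),
        (B : Fin 6 → RingQuot (Stmt9Rel k)) =
          (let x : RingQuot (Stmt9Rel k) :=
            RingQuot.mkRingHom (Stmt9Rel k) (FreeAlgebra.ι k 0)
          let y : RingQuot (Stmt9Rel k) :=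
            RingQuot.mkRingHom (Stmt9Rel k) (FreeAlgebra.ι k 1)
          ![1, x, y, x * y, y * x, x * y * x]) := by
  set A := RingQuot (Stmt9Rel k)
  set x : A := RingQuot.mkRingHom (Stmt9Rel k) (FreeAlgebra.ι k 0) with hxdef
  set y : A := RingQuot.mkRingHom (Stmt9Rel k) (FreeAlgebra.ι k 1) with hydef
  set v : Fin 6 → A := ![1, x, y, x * y, y * x, x * y * x] with hvdef
  -- relations in A
  have hx2 : x * x = 0 := by
    rw [hxdef, ← map_mul, RingQuot.mkRingHom_rel Stmt9Rel.xx, map_zero]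
  have hy2 : y * y = 0 := by
    rw [hydef, ← map_mul, RingQuot.mkRingHom_rel Stmt9Rel.yy, map_zero]
  have hbr : x * y * x = y * x * y := by
    rw [hxdef, hydef, ← map_mul, ← map_mul, RingQuot.mkRingHom_rel Stmt9Rel.braid,
      map_mul, map_mul]
  -- the representation
  have hwd : ∀ ⦃a b : FreeAlgebra k (Fin 2)⦄, Stmt9Rel k a b →
      (FreeAlgebra.lift k ![stmt9X k, stmt9Y k]) a =
      (FreeAlgebra.lift k ![stmt9X k, stmt9Y k]) b := by
    rintro a b (h | h | h) <;>
      simp [stmt9XX, stmt9YY, stmt9Braid]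
  set φ : A →ₐ[k] Matrix (Fin 6) (Fin 6) k :=
    RingQuot.liftAlgHom k ⟨FreeAlgebra.lift k ![stmt9X k, stmt9Y k], hwd⟩ with hφdef
  have hmk : ∀ a : FreeAlgebra k (Fin 2),
      RingQuot.mkAlgHom k (Stmt9Rel k) a = RingQuot.mkRingHom (Stmt9Rel k) a := by
    intro a
    rw [← RingQuot.mkAlgHom_coe k (Stmt9Rel k)]; rfl
  have hφx : φ x = stmt9X k := by
    rw [hxdef, ← hmk, hφdef, RingQuot.liftAlgHom_mkAlgHom_apply]
    simp
  have hφy : φ y = stmt9Y k := by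
    rw [hydef, ← hmk, hφdef, RingQuot.liftAlgHom_mkAlgHom_apply]
    simp
  -- column-0 evaluation
  set L : A →ₗ[k] (Fin 6 → k) :=
    { toFun := fun a i => φ a i 0
      map_add' := by intro a b; funext i; simp
      map_smul' := by intro c a; funext i; simp } with hLdef
  have hLv : ∀ i : Fin 6, L (v i) = Pi.single i (1 : k) := by
    have e1 : L 1 = Pi.single 0 1 := by
      funext j
      simp only [hLdef, LinearMap.coe_mk, AddHom.coe_mk, map_one]
      fin_cases j <;>
        simp (config := { decide := true }) [Matrix.one_apply, Pi.single_apply]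
    have ex : L x = Pi.single 1 1 := by
      funext j
      simp only [hLdef, LinearMap.coe_mk, AddHom.coe_mk, hφx]
      fin_cases j <;>
        simp (config := { decide := true }) [stmt9X, Pi.single_apply]
    have ey : L y = Pi.single 2 1 := by
      funext j
      simp only [hLdef, LinearMap.coe_mk, AddHom.coe_mk, hφy]
      fin_cases j <;>
        simp (config := { decide := true }) [stmt9Y, Pi.single_apply]
    have exy : L (x * y) = Pi.single 3 1 := by
      funext j
      simp only [hLdef, LinearMap.coe_mk, AddHom.coe_mk, map_mul, hφx, hφy]
      fin_cases j <;>
        simp (config := { decide := true }) [stmt9X, stmt9Y, Matrix.mul_apply,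
          Fin.sum_univ_six, Pi.single_apply]
    have eyx : L (y * x) = Pi.single 4 1 := by
      funext j
      simp only [hLdef, LinearMap.coe_mk, AddHom.coe_mk, map_mul, hφx, hφy]
      fin_cases j <;>
        simp (config := { decide := true }) [stmt9X, stmt9Y, Matrix.mul_apply,
          Fin.sum_univ_six, Pi.single_apply]
    have exyx : L (x * y * x) = Pi.single 5 1 := by
      funext j
      simp only [hLdef, LinearMap.coe_mk, AddHom.coe_mk, map_mul, hφx, hφy]
      fin_cases j <;>
        simp (config := { decide := true }) [stmt9X, stmt9Y, Matrix.mul_apply,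
          Fin.sum_univ_six, Pi.single_apply]
    intro i
    fin_cases i
    · exact e1
    · exact ex
    · exact ey
    · exact exy
    · exact eyx
    · exact exyx
  have hli : LinearIndependent k v := by
    apply LinearIndependent.of_comp L
    have : (⇑L ∘ v) = fun i => (Pi.basisFun k (Fin 6)) i := by
      funext i
      simp [Function.comp, hLv i, Pi.basisFun_apply]
    rw [this]
    exact (Pi.basisFun k (Fin 6)).linearIndependent
  -- spanning
  set S : Submodule k A := Submodule.span k (Set.range v) with hSdef
  have hmem : ∀ i : Fin 6, v i ∈ S := fun i =>
    Submodule.subset_span (Set.mem_range_self i)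
  have h1 : (1 : A) ∈ S := hmem 0
  have hxmul : ∀ s ∈ S, x * s ∈ S := by
    intro s hs
    induction hs using Submodule.span_induction with
    | mem s hsm =>
      obtain ⟨i, rfl⟩ := hsm
      fin_cases i
      · show x * 1 ∈ S
        rw [mul_one]; exact hmem 1
      · show x * x ∈ S
        rw [hx2]; exact S.zero_mem
      · show x * y ∈ S
        exact hmem 3
      · show x * (x * y) ∈ S
        rw [← mul_assoc, hx2, zero_mul]; exact S.zero_mem
      · show x * (y * x) ∈ S
        rw [← mul_assoc]; exact hmem 5
      · show x * (x * y * x) ∈ S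
        rw [← mul_assoc, ← mul_assoc, hx2, zero_mul, zero_mul]; exact S.zero_mem
    | zero => rw [mul_zero]; exact S.zero_mem
    | add a b _ _ ha hb => rw [mul_add]; exact S.add_mem ha hb
    | smul c a _ ha => rw [mul_smul_comm]; exact S.smul_mem c ha
  have hymul : ∀ s ∈ S, y * s ∈ S := by
    intro s hs
    induction hs using Submodule.span_induction with
    | mem s hsm =>
      obtain ⟨i, rfl⟩ := hsm
      fin_cases i
      · show y * 1 ∈ S
        rw [mul_one]; exact hmem 2
      · show y * x ∈ S
        exact hmem 4
      · show y * y ∈ S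
        rw [hy2]; exact S.zero_mem
      · show y * (x * y) ∈ S
        rw [← mul_assoc, ← hbr]; exact hmem 5
      · show y * (y * x) ∈ S
        rw [← mul_assoc, hy2, zero_mul]; exact S.zero_mem
      · show y * (x * y * x) ∈ S
        rw [show y * (x * y * x) = y * x * y * x by noncomm_ring, ← hbr,
          mul_assoc (x * y) x x, hx2, mul_zero]
        exact S.zero_mem
    | zero => rw [mul_zero]; exact S.zero_mem
    | add a b _ _ ha hb => rw [mul_add]; exact S.add_mem ha hb
    | smul c a _ ha => rw [mul_smul_comm]; exact S.smul_mem c ha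
  have key : ∀ a : A, ∀ s ∈ S, a * s ∈ S := by
    intro a
    obtain ⟨b, rfl⟩ := RingQuot.mkAlgHom_surjective k (Stmt9Rel k) a
    induction b using FreeAlgebra.induction with
    | grade0 r =>
      intro s hs
      rw [AlgHom.commutes, ← Algebra.smul_def]
      exact S.smul_mem r hs
    | grade1 i =>
      fin_cases i
      · rw [hmk]; exact hxmul
      · rw [hmk]; exact hymul
    | mul a b ha hb =>
      intro s hs
      rw [map_mul, mul_assoc]
      exact ha _ (hb s hs)
    | add a b ha hb =>
      intro s hs
      rw [map_add, add_mul]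
      exact S.add_mem (ha s hs) (hb s hs)
  have hsp : ⊤ ≤ S := by
    intro a _
    simpa using key a 1 h1
  let B : Module.Basis (Fin 6) k A := Module.Basis.mk hli hsp
  have hB : (B : Fin 6 → A) = v := Module.Basis.coe_mk hli hsp
  refine ⟨?_, B, ?_⟩
  · rw [Module.finrank_eq_card_basis B, Fintype.card_fin]
  · rw [hB]
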